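/- Let G be a group, φ : G → ℝ a homogeneous quasimorphism with defect D_φ > 0, and x ∈ [G,G]. Then scl(x) ≥ |φ(x)| / (2 D_φ). -/

import Mathlib

open Filter
open scoped commutatorElement

/-- The commutator length: the minimal number of commutators needed to write `x`
as a product of commutators. -/
noncomputable def cl {G : Type*} [Group G] (x : G) : ℕ :=
  sInf {n : ℕ | ∃ L : List (G × G), L.length = n ∧ x = (L.map fun p => ⁅p.1, p.2⁆).prod}

theorem stmt_9 {G : Type*} [Group G] (φ : G → ℝ) (D : ℝ) (hD : 0 < D)
    (hdefect : IsLUB {r : ℝ | ∃ x y : G, r = |φ (x * y) - φ x - φ y|} D)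
    (hhom : ∀ (x : G) (n : ℤ), φ (x ^ n) = n * φ x)
    (x : G) (hx : x ∈ commutator G) (L : ℝ)
    (hL : Tendsto (fun n : ℕ => (cl (x ^ n) : ℝ) / n) atTop (nhds L)) :
    |φ x| / (2 * D) ≤ L := by
  have hub : ∀ a b : G, |φ (a * b) - φ a - φ b| ≤ D := fun a b =>
    hdefect.1 ⟨a, b, rfl⟩
  have hφ1 : φ 1 = 0 := by
    have := hhom 1 0; simpa using this
  have hφinv : ∀ a : G, φ a⁻¹ = -φ a := by
    intro a
    have := hhom a (-1); simpa using this
  -- conjugation invariance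
  have hconj : ∀ g a : G, φ (g * a * g⁻¹) = φ a := by
    intro g a
    have key : ∀ n : ℕ, (n : ℝ) * |φ (g * a * g⁻¹) - φ a| ≤ 2 * D := by
      intro n
      have h1 : (g * a * g⁻¹) ^ (n : ℤ) = g * a ^ (n : ℤ) * g⁻¹ := by
        rw [conj_zpow]
      have h2 := hub (g * a ^ (n : ℤ)) g⁻¹
      have h3 := hub g (a ^ (n : ℤ))
      have e1 := hhom (g * a * g⁻¹) n
      have e2 := hhom a n
      rw [h1] at e1
      push_cast at e1 e2
      have : |(n : ℝ) * φ (g * a * g⁻¹) - (n : ℝ) * φ a| ≤ 2 * D := by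
        have hgi := hφinv g
        calc |(n : ℝ) * φ (g * a * g⁻¹) - (n : ℝ) * φ a|
            = |(φ (g * a ^ (n:ℤ) * g⁻¹) - φ (g * a ^ (n:ℤ)) - φ g⁻¹)
              + (φ (g * a ^ (n:ℤ)) - φ g - φ (a ^ (n:ℤ)))| := by
              rw [← e1, ← e2, hgi]; congr 1; ring
          _ ≤ |φ (g * a ^ (n:ℤ) * g⁻¹) - φ (g * a ^ (n:ℤ)) - φ g⁻¹|
              + |φ (g * a ^ (n:ℤ)) - φ g - φ (a ^ (n:ℤ))| := abs_add_le _ _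
          _ ≤ D + D := add_le_add h2 h3
          _ = 2 * D := by ring
      calc (n : ℝ) * |φ (g * a * g⁻¹) - φ a|
          = |(n : ℝ) * φ (g * a * g⁻¹) - (n : ℝ) * φ a| := by
            rw [← mul_sub, abs_mul, abs_of_nonneg (show (0:ℝ) ≤ (n:ℝ) from Nat.cast_nonneg n)]
        _ ≤ 2 * D := this
    by_contra hne
    have hpos : 0 < |φ (g * a * g⁻¹) - φ a| := by
      rw [abs_pos]; intro h; exact hne (by linarith [sub_eq_zero.mp h])
    obtain ⟨n, hn⟩ := exists_nat_gt (2 * D / |φ (g * a * g⁻¹) - φ a|)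
    have := key n
    have : 2 * D / |φ (g * a * g⁻¹) - φ a| < (n : ℝ) := hn
    have h2 : 2 * D < (n : ℝ) * |φ (g * a * g⁻¹) - φ a| := by
      rwa [div_lt_iff₀ hpos] at this
    linarith [key n]
  -- φ of a commutator is bounded by D
  have hcomm : ∀ a b : G, |φ ⁅a, b⁆| ≤ D := by
    intro a b
    have h := hub (a * b * a⁻¹) b⁻¹
    have h1 : φ (a * b * a⁻¹) = φ b := hconj a b
    have h2 : φ b⁻¹ = -φ b := hφinv b
    have h3 : ⁅a, b⁆ = a * b * a⁻¹ * b⁻¹ := commutatorElement_def a b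
    rw [h3]
    rw [h1, h2] at h
    calc |φ (a * b * a⁻¹ * b⁻¹)| = |φ (a * b * a⁻¹ * b⁻¹) - φ b - -φ b| := by ring_nf
      _ ≤ D := h
  -- product of n commutators bound
  have hprod : ∀ (Lst : List (G × G)),
      |φ (Lst.map fun p => ⁅p.1, p.2⁆).prod| ≤ 2 * Lst.length * D := by
    intro Lst
    induction Lst with
    | nil => simpa [hφ1] using hD.le
    | cons p t ih =>
      simp only [List.map_cons, List.prod_cons, List.length_cons]
      have h := hub ⁅p.1, p.2⁆ ((t.map fun p => ⁅p.1, p.2⁆).prod)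
      have hc := hcomm p.1 p.2
      have h1 := abs_le.mp h
      have h2 := abs_le.mp hc
      have h3 := abs_le.mp ih
      rw [abs_le]
      push_cast
      constructor <;> nlinarith
  -- membership gives existence of a list
  have hmem : ∀ y : G, y ∈ commutator G →
      ∃ Lst : List (G × G), y = (Lst.map fun p => ⁅p.1, p.2⁆).prod := by
    intro y hy
    rw [commutator_eq_closure] at hy
    induction hy using Subgroup.closure_induction with
    | mem z hz =>
      obtain ⟨a, b, rfl⟩ := hz
      exact ⟨[(a, b)], by simp⟩
    | one => exact ⟨[], by simp⟩
    | mul a b _ _ iha ihb =>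
      obtain ⟨La, ha⟩ := iha
      obtain ⟨Lb, hb⟩ := ihb
      exact ⟨La ++ Lb, by simp [ha, hb]⟩
    | inv a _ iha =>
      obtain ⟨La, ha⟩ := iha
      refine ⟨(La.map Prod.swap).reverse, ?_⟩
      rw [ha, List.prod_inv_reverse]
      simp [List.map_reverse, List.map_map, Function.comp_def, commutatorElement_inv]
  -- main estimate for each n ≥ 1
  have key : ∀ n : ℕ, 1 ≤ n → |φ x| / (2 * D) ≤ (cl (x ^ n) : ℝ) / n := by
    intro n hn
    have hxn : x ^ n ∈ commutator G := (commutator G).pow_mem hx n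
    obtain ⟨Lst, hLst⟩ := hmem (x ^ n) hxn
    have hne : (cl (x ^ n)) ∈ {m : ℕ | ∃ Lst : List (G × G),
        Lst.length = m ∧ x ^ n = (Lst.map fun p => ⁅p.1, p.2⁆).prod} :=
      Nat.sInf_mem ⟨Lst.length, Lst, rfl, hLst⟩
    obtain ⟨M, hMlen, hMeq⟩ := hne
    have hbound : |φ (x ^ n)| ≤ 2 * (cl (x ^ n) : ℝ) * D := by
      have := hprod M
      rw [hMlen, ← hMeq] at this
      exact this
    have hφxn : φ (x ^ n) = (n : ℝ) * φ x := by
      have := hhom x n; rw [zpow_natCast] at this; simpa using this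
    rw [hφxn, abs_mul, abs_of_nonneg (show (0:ℝ) ≤ (n:ℝ) from Nat.cast_nonneg n)] at hbound
    have hnpos : (0 : ℝ) < n := by exact_mod_cast hn
    rw [div_le_div_iff₀ (by linarith) hnpos]
    nlinarith
  -- pass to the limit
  refine ge_of_tendsto hL ?_
  filter_upwards [eventually_ge_atTop 1] with n hn
  exact key n hn
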